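/- The function u ↦ u·tanh((β/2)·√(u²+x²))/√(u²+x²) is strictly increasing on [0,∞) for every fixed x > 0 and β > 0. -/
import Mathlib

lemma tanh_strictMono : StrictMono Real.tanh := by
  intro a b hab
  rw [Real.tanh_eq_sinh_div_cosh, Real.tanh_eq_sinh_div_cosh,
    div_lt_div_iff₀ (Real.cosh_pos a) (Real.cosh_pos b)]
  have h : 0 < Real.sinh (b - a) := Real.sinh_pos_iff.2 (by linarith)
  rw [Real.sinh_sub] at h
  nlinarith

theorem phi_strictMono (β x : ℝ) (hβ : 0 < β) (hx : 0 < x) :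
    StrictMonoOn
      (fun u : ℝ =>
        u * Real.tanh (β / 2 * Real.sqrt (u ^ 2 + x ^ 2)) / Real.sqrt (u ^ 2 + x ^ 2))
      (Set.Ici 0) := by
  intro a ha b hb hab
  simp only [Set.mem_Ici] at ha hb
  set ra := Real.sqrt (a ^ 2 + x ^ 2) with hra
  set rb := Real.sqrt (b ^ 2 + x ^ 2) with hrb
  have hra0 : 0 < ra := Real.sqrt_pos.2 (by nlinarith)
  have hrb0 : 0 < rb := Real.sqrt_pos.2 (by nlinarith)
  have hrlt : ra < rb := by
    apply Real.sqrt_lt_sqrt (by nlinarith)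
    nlinarith
  have htanh : Real.tanh (β / 2 * ra) < Real.tanh (β / 2 * rb) :=
    tanh_strictMono (by nlinarith)
  have htpos : 0 < Real.tanh (β / 2 * ra) := by
    have := tanh_strictMono (show (0:ℝ) < β / 2 * ra by positivity)
    simpa [Real.tanh_zero] using this
  have htpos' : 0 < Real.tanh (β / 2 * rb) := lt_trans htpos htanh
  -- a / ra < b / rb
  have hdiv : a / ra < b / rb := by
    rw [div_lt_div_iff₀ hra0 hrb0]
    -- a * rb < b * ra, i.e. a^2 (b^2+x^2) < b^2 (a^2+x^2)
    have hsq : (a * rb) ^ 2 < (b * ra) ^ 2 := by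
      have h1 : ra ^ 2 = a ^ 2 + x ^ 2 := Real.sq_sqrt (by positivity)
      have h2 : rb ^ 2 = b ^ 2 + x ^ 2 := Real.sq_sqrt (by positivity)
      have hab2 : a ^ 2 < b ^ 2 := by nlinarith
      nlinarith [mul_lt_mul_of_pos_right hab2 (show (0:ℝ) < x ^ 2 by positivity)]
    exact lt_of_pow_lt_pow_left₀ 2 (by positivity) hsq
  have hdnn : 0 ≤ a / ra := div_nonneg ha hra0.le
  have hdpos : 0 < b / rb := div_pos (lt_of_le_of_lt ha hab) hrb0
  simp only
  have e1 : a * Real.tanh (β / 2 * ra) / ra = Real.tanh (β / 2 * ra) * (a / ra) := by ring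
  have e2 : b * Real.tanh (β / 2 * rb) / rb = Real.tanh (β / 2 * rb) * (b / rb) := by ring
  rw [e1, e2]
  calc Real.tanh (β / 2 * ra) * (a / ra)
      ≤ Real.tanh (β / 2 * rb) * (a / ra) := by nlinarith
    _ < Real.tanh (β / 2 * rb) * (b / rb) := by nlinarith
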